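/- Let p ≠ 2 be a prime with p | D and p² ∤ D, let l ≥ 1 be an integer, and assume p^{l+1} divides none of A, B, A−B, G(A,B). Then S^(D;A,B)(ℚ_p) ≠ ∅ if and only if there exists t ∈ ℤ⁵ with at least one coordinate not divisible by p such that Q1(t) ≡ 0 (mod p^{8l+1}) and Q2(t) ≡ 0 (mod p^{8l+1}). -/

import Mathlib

open PadicInt

variable {p : ℕ} [hp : Fact p.Prime]

lemma unit_of_not_dvd {x : ℤ_[p]} (h : ¬ ((p:ℤ_[p]) ∣ x)) : IsUnit x := by
  rw [PadicInt.isUnit_iff]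
  have := (PadicInt.norm_lt_one_iff_dvd x).not.mpr h
  have hle : ‖x‖ ≤ 1 := PadicInt.norm_le_one _
  push_neg at this
  linarith

lemma two_unit (hp2 : p ≠ 2) : IsUnit (2 : ℤ_[p]) := by
  apply unit_of_not_dvd
  intro h
  have h1 : ((p:ℤ_[p])^1 ∣ ((2:ℤ) : ℤ_[p])) := by
    simpa using h
  rw [PadicInt.pow_p_dvd_int_iff] at h1
  have h2 : p ∣ 2 := by
    have : (p:ℤ) ∣ 2 := by simpa using h1
    exact_mod_cast this
  exact hp2 ((Nat.prime_dvd_prime_iff_eq hp.out Nat.prime_two).mp h2)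

lemma pnz : (p : ℤ_[p]) ≠ 0 := (PadicInt.prime_p (p := p)).ne_zero

lemma factor : ∀ (k : ℕ) {x : ℤ_[p]}, ¬ ((p:ℤ_[p])^(k+1) ∣ x) →
    ∃ n, n ≤ k ∧ ∃ w : ℤ_[p], IsUnit w ∧ x = (p:ℤ_[p])^n * w := by
  intro k
  induction k with
  | zero =>
    intro x h
    refine ⟨0, le_rfl, x, unit_of_not_dvd (by simpa using h), by ring⟩
  | succ k ih =>
    intro x h
    by_cases hd : (p:ℤ_[p]) ∣ x
    · obtain ⟨y, rfl⟩ := hd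
      have hy : ¬ ((p:ℤ_[p])^(k+1) ∣ y) := by
        intro hy; exact h (by
          obtain ⟨z, rfl⟩ := hy
          exact ⟨z, by ring⟩)
      obtain ⟨n, hn, w, hw, rfl⟩ := ih hy
      exact ⟨n+1, by omega, w, hw, by ring⟩
    · exact ⟨0, by omega, x, unit_of_not_dvd hd, by ring⟩

/-- key square root lemma -/
lemma sqrt_one_add (hp2 : p ≠ 2) (ε : ℤ_[p]) :
    ∃ s u : ℤ_[p], IsUnit u ∧ s^2 = 1 + (p:ℤ_[p])*ε ∧ (s - 1) * u = (p:ℤ_[p])*ε := by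
  classical
  set F : Polynomial ℤ_[p] := Polynomial.X^2 - Polynomial.C (1 + (p:ℤ_[p])*ε) with hF
  have heval : F.eval 1 = -((p:ℤ_[p])*ε) := by simp [hF]
  have hde : F.derivative.eval 1 = 2 := by simp [hF]; norm_num
  have h2n : ‖(2:ℤ_[p])‖ = 1 := PadicInt.isUnit_iff.mp (two_unit hp2)
  have hnorm : ‖F.eval 1‖ < ‖F.derivative.eval 1‖ ^ 2 := by
    rw [heval, hde, h2n, norm_neg, one_pow]
    calc ‖(p:ℤ_[p])*ε‖ = ‖(p:ℤ_[p])‖ * ‖ε‖ := norm_mul _ _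
      _ ≤ (p:ℝ)⁻¹ * 1 := by
          rw [PadicInt.norm_p]
          have h1 : ‖ε‖ ≤ 1 := PadicInt.norm_le_one _
          have h2 : (0:ℝ) ≤ (p:ℝ)⁻¹ := by positivity
          nlinarith [norm_nonneg ε]
      _ = (p:ℝ)⁻¹ := mul_one _
      _ < 1 := by
          rw [inv_lt_one_iff₀]
          right; exact_mod_cast hp.out.one_lt
  obtain ⟨s, hs0, hs1, -⟩ := hensels_lemma hnorm
  rw [Polynomial.coe_aeval_eq_eval] at hs0
  rw [Polynomial.coe_aeval_eq_eval] at hs1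
  rw [show F.eval s = s^2 - (1 + (p:ℤ_[p])*ε) by simp [hF]] at hs0
  have hs : s^2 = 1 + (p:ℤ_[p])*ε := sub_eq_zero.mp hs0
  rw [hde] at hs1
  have h2n' : ‖(2:ℤ_[p])‖ = 1 := h2n
  rw [h2n'] at hs1
  have hne : ‖s - 1‖ ≠ ‖(2:ℤ_[p])‖ := by rw [h2n']; exact ne_of_lt hs1
  have hu : IsUnit (s + 1) := by
    rw [PadicInt.isUnit_iff, show s + 1 = (s - 1) + 2 by ring,
      PadicInt.norm_add_eq_max_of_ne hne, h2n']
    exact max_eq_right hs1.le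
  exact ⟨s, s + 1, hu, hs, by linear_combination hs⟩

/-- Solve `x^2 = w^2 + R` when `p*w^2 ∣ R`; moreover `w*(x-w)*u = R` for a unit `u`,
and `x = w * s` with `s` a unit. -/
lemma sqrt_shift (hp2 : p ≠ 2) {w R : ℤ_[p]} (h : (p:ℤ_[p]) * w^2 ∣ R) :
    ∃ x u : ℤ_[p], IsUnit u ∧ x^2 = w^2 + R ∧ w * (x - w) * u = R ∧
      ∃ v : ℤ_[p], IsUnit v ∧ x = w * v := by
  obtain ⟨ε, hε⟩ := h
  obtain ⟨s, u, hu, hs, hsu⟩ := sqrt_one_add hp2 ε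
  refine ⟨w * s, u, hu, ?_, ?_, s, ?_, rfl⟩
  · rw [hε]; linear_combination w^2 * hs
  · rw [hε]; linear_combination w^2 * hsu
  · apply unit_of_not_dvd
    intro hd
    have h1 : (p:ℤ_[p]) ∣ 1 := by
      have h2 : (p:ℤ_[p]) ∣ s^2 := Dvd.dvd.mul_right hd s |>.trans (by rw [sq])
      rw [hs] at h2
      have h3 : (p:ℤ_[p]) ∣ (p:ℤ_[p])*ε := Dvd.intro ε rfl
      simpa using (dvd_sub h2 h3)
    exact (PadicInt.prime_p (p:=p)).not_unit (isUnit_of_dvd_one h1)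


lemma cancel_pow {n : ℕ} {x y : ℤ_[p]} (h : (p:ℤ_[p])^n * x = (p:ℤ_[p])^n * y) : x = y :=
  mul_left_cancel₀ (pow_ne_zero n pnz) h

lemma pow_dvd_sq : ∀ (k : ℕ) {x : ℤ_[p]}, (p:ℤ_[p])^(2*k+1) ∣ x^2 → (p:ℤ_[p])^(k+1) ∣ x := by
  intro k
  induction k with
  | zero =>
    intro x h
    have h1 : (p:ℤ_[p]) ∣ x^2 := by simpa using h
    simpa using (PadicInt.prime_p (p:=p)).dvd_of_dvd_pow h1
  | succ k ih =>
    intro x h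
    have h1 : (p:ℤ_[p]) ∣ x := by
      have : (p:ℤ_[p]) ∣ x^2 := dvd_trans (dvd_pow_self _ (by omega)) h
      exact (PadicInt.prime_p (p:=p)).dvd_of_dvd_pow this
    obtain ⟨y, rfl⟩ := h1
    obtain ⟨q, hq⟩ := h
    have h2 : (p:ℤ_[p])^(2*k+1) ∣ y^2 := by
      refine ⟨q, ?_⟩
      apply cancel_pow (n := 2) (x := y^2)
      rw [show ((p:ℤ_[p]))^2 * ((p:ℤ_[p])^(2*k+1) * q) = (p:ℤ_[p])^(2*(k+1)+1) * q by
        rw [← mul_assoc, ← pow_add]; ring_nf]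
      linear_combination hq
    obtain ⟨z, hz⟩ := ih h2
    exact ⟨z, by rw [pow_succ]; rw [hz]; ring⟩

lemma extract {i n : ℕ} {w w' y q : ℤ_[p]} (hw : w * w' = 1)
    (h : (p:ℤ_[p])^n * w * y = (p:ℤ_[p])^(n+i) * q) : y = (p:ℤ_[p])^i * (q * w') := by
  apply cancel_pow (n := n)
  have hpa : (p:ℤ_[p])^(n+i) = (p:ℤ_[p])^n * (p:ℤ_[p])^i := pow_add _ _ _
  rw [hpa] at h
  linear_combination w' * h - ((p:ℤ_[p])^n * y) * hw

lemma solve_quad (hp2 : p ≠ 2) {D uD uD' d K : ℤ_[p]} (hD : D = (p:ℤ_[p]) * uD)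
    (huD : uD * uD' = 1) {m j : ℕ} (hd : ¬ (p:ℤ_[p])^(m+1) ∣ d)
    (hQ : (p:ℤ_[p])^j ∣ (K - D*d^2)) (hj : 2*m + 2 ≤ j) :
    ∃ x : ℤ_[p], D * x^2 = K ∧ x ≠ 0 := by
  obtain ⟨n, hn, w, hwu, hdw⟩ := factor m hd
  obtain ⟨w', hw⟩ := hwu.exists_right_inv
  obtain ⟨q, hq⟩ := hQ
  have hdnz : d ≠ 0 := by rintro rfl; exact hd (dvd_zero _)
  set R : ℤ_[p] := (p:ℤ_[p])^(j-1) * q * uD' with hR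
  have hKq : K = (p:ℤ_[p])^j * q + D * d^2 := by linear_combination hq
  have hpj : (p:ℤ_[p])^j = (p:ℤ_[p]) * (p:ℤ_[p])^(j-1) := by
    rw [← pow_succ']; congr 1; omega
  have hDR : D * R = K - D*d^2 := by
    rw [hKq, hD, hR, hpj]
    linear_combination ((p:ℤ_[p]) * (p:ℤ_[p])^(j-1) * q) * huD
  have e2 : (p:ℤ_[p]) * d^2 = (p:ℤ_[p])^(2*n+1) * w^2 := by
    rw [hdw, mul_pow, ← pow_mul,
      show (p:ℤ_[p])^(2*n+1) = (p:ℤ_[p])^(n*2) * (p:ℤ_[p]) by rw [← pow_succ]; congr 1; omega]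
    ring
  have e1 : (p:ℤ_[p])^(j-1) = (p:ℤ_[p])^(2*n+1) * (p:ℤ_[p])^(j-1-(2*n+1)) := by
    rw [← pow_add]; congr 1; omega
  have hcond : (p:ℤ_[p]) * d^2 ∣ R := by
    refine ⟨(p:ℤ_[p])^(j-1-(2*n+1)) * q * uD' * (w' * w'), ?_⟩
    rw [hR, e2, e1]
    linear_combination (-((p:ℤ_[p])^(2*n+1) * (p:ℤ_[p])^(j-1-(2*n+1)) * q * uD') * (w*w'+1)) * hw
  obtain ⟨x, u, hu, hx2, hxu, v, hv, hxv⟩ := sqrt_shift hp2 hcond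
  refine ⟨x, ?_, ?_⟩
  · rw [hx2]; linear_combination hDR
  · rw [hxv]; exact mul_ne_zero hdnz hv.ne_zero

lemma dvd_shift_cond {m k : ℕ} {s w w' R r : ℤ_[p]} (hs : s = (p:ℤ_[p])^m * w)
    (hw : w * w' = 1) (hR : R = (p:ℤ_[p])^k * r) (hmk : 2*m+1 ≤ k) :
    (p:ℤ_[p]) * s^2 ∣ R := by
  refine ⟨(p:ℤ_[p])^(k-(2*m+1)) * r * (w'*w'), ?_⟩
  have e2 : (p:ℤ_[p]) * s^2 = (p:ℤ_[p])^(2*m+1) * w^2 := by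
    rw [hs, mul_pow, ← pow_mul,
      show (p:ℤ_[p])^(2*m+1) = (p:ℤ_[p])^(m*2) * (p:ℤ_[p]) by rw [← pow_succ]; congr 1; omega]
    ring
  have e1 : (p:ℤ_[p])^k = (p:ℤ_[p])^(2*m+1) * (p:ℤ_[p])^(k-(2*m+1)) := by
    rw [← pow_add]; congr 1; omega
  rw [hR, e2, e1]
  linear_combination (-((p:ℤ_[p])^(2*m+1) * (p:ℤ_[p])^(k-(2*m+1)) * r) * (w*w'+1)) * hw

lemma dvd_extract {m i : ℕ} {s w w' y r : ℤ_[p]} (hs : s = (p:ℤ_[p])^m * w)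
    (hw : w*w' = 1) (h : s * y = (p:ℤ_[p])^(m+i) * r) : y = (p:ℤ_[p])^i * (r * w') := by
  rw [hs] at h
  exact extract hw h

lemma dvd_of_dvd_mul_unit {k : ℕ} {X b b' : ℤ_[p]} (hb : b*b' = 1)
    (h : (p:ℤ_[p])^k ∣ X*b) : (p:ℤ_[p])^k ∣ X := by
  obtain ⟨t, ht⟩ := h
  exact ⟨t*b', by linear_combination b' * ht - X * hb⟩

lemma p_dvd_of_sq {x : ℤ_[p]} (h : (p:ℤ_[p]) ∣ x^2) : (p:ℤ_[p]) ∣ x :=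
  (PadicInt.prime_p (p:=p)).dvd_of_dvd_pow h

lemma dvd_pm {k m : ℕ} (h : k ≤ m) (x : ℤ_[p]) : (p:ℤ_[p])^k ∣ (p:ℤ_[p])^m * x :=
  dvd_trans (pow_dvd_pow _ h) (dvd_mul_right _ _)

lemma dvd_pm2 {k m n : ℕ} (h : k ≤ m + n) (x y : ℤ_[p]) :
    (p:ℤ_[p])^k ∣ ((p:ℤ_[p])^m * x) * ((p:ℤ_[p])^n * y) := by
  have he : ((p:ℤ_[p])^m * x) * ((p:ℤ_[p])^n * y) = (p:ℤ_[p])^(m+n) * (x*y) := by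
    rw [pow_add]; ring
  rw [he]; exact dvd_pm h _

lemma De2_eq {m : ℕ} (uD x : ℤ_[p]) :
    ((p:ℤ_[p]) * uD) * ((p:ℤ_[p])^m * x)^2 = (p:ℤ_[p])^(2*m+1) * (uD * x^2) := by
  rw [mul_pow, ← pow_mul,
    show (p:ℤ_[p])^(2*m+1) = (p:ℤ_[p])^(m*2)*(p:ℤ_[p]) by rw [← pow_succ]; congr 1; omega]
  ring

set_option maxHeartbeats 1000000 in
lemma lift (hp2 : p ≠ 2) (l : ℕ) (hl : 1 ≤ l) (D A B : ℤ_[p])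
    (hD : (p:ℤ_[p]) ∣ D) (hD2 : ¬ (p:ℤ_[p])^2 ∣ D)
    (hA : ¬ (p:ℤ_[p])^(l+1) ∣ A) (hB : ¬ (p:ℤ_[p])^(l+1) ∣ B)
    (hAB : ¬ (p:ℤ_[p])^(l+1) ∣ (A - B))
    (hG : ¬ (p:ℤ_[p])^(l+1) ∣ ((A-B)^2 - 2*(A+B) + 1))
    (a b c d e : ℤ_[p])
    (hprim : ¬(p:ℤ_[p]) ∣ a ∨ ¬(p:ℤ_[p]) ∣ b ∨ ¬(p:ℤ_[p]) ∣ c ∨ ¬(p:ℤ_[p]) ∣ d ∨ ¬(p:ℤ_[p]) ∣ e)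
    (h1 : (p:ℤ_[p])^(8*l+1) ∣ (c^2 - D*d^2 - a*b))
    (h2 : (p:ℤ_[p])^(8*l+1) ∣ (c^2 - D*e^2 - (a+A*b)*(a+B*b))) :
    ∃ a' b' c' d' e' : ℤ_[p], (a' ≠ 0 ∨ b' ≠ 0 ∨ c' ≠ 0 ∨ d' ≠ 0 ∨ e' ≠ 0) ∧
      c'^2 - D*d'^2 - a'*b' = 0 ∧ c'^2 - D*e'^2 - (a'+A*b')*(a'+B*b') = 0 := by
  -- factor D = p * uD with uD a unit
  have hDfac : ∃ uD uD' : ℤ_[p], D = (p:ℤ_[p]) * uD ∧ uD * uD' = 1 := by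
    obtain ⟨n, hn, w, hwu, hDw⟩ := factor 1 hD2
    obtain ⟨w', hw⟩ := hwu.exists_right_inv
    interval_cases n
    · exfalso
      rw [hDw] at hD
      simp only [pow_zero, one_mul] at hD
      have : (p:ℤ_[p]) ∣ 1 := by
        obtain ⟨t, ht⟩ := hD
        exact ⟨t*w', by linear_combination w' * ht - hw⟩
      exact (PadicInt.prime_p (p:=p)).not_unit (isUnit_of_dvd_one this)
    · exact ⟨w, w', by rw [hDw, pow_one], hw⟩
  obtain ⟨uD, uD', hDuD, huD'⟩ := hDfac
  obtain ⟨q1, hq1⟩ := id h1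
  obtain ⟨q2, hq2⟩ := id h2
  have h4nz : (4:ℤ_[p]) ≠ 0 := by
    have : ((4:ℤ) : ℤ_[p]) ≠ 0 := Int.cast_ne_zero.mpr (by norm_num)
    exact_mod_cast this
  by_cases hd2l : (p:ℤ_[p])^(2*l) ∣ d
  · by_cases he2l : (p:ℤ_[p])^(2*l) ∣ e
    · -- CASE IV : d, e both large
      obtain ⟨d0, hd0⟩ := id hd2l
      obtain ⟨e0, he0⟩ := id he2l
      have hDd : (p:ℤ_[p])^(4*l+1) ∣ D*d^2 := by
        rw [hDuD, hd0, De2_eq]; exact dvd_pm (by omega) _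
      have hDe : (p:ℤ_[p])^(4*l+1) ∣ D*e^2 := by
        rw [hDuD, he0, De2_eq]; exact dvd_pm (by omega) _
      have hH : (p:ℤ_[p])^(4*l+1) ∣ ((a+A*b)*(a+B*b) - a*b) := by
        have hexp : (a+A*b)*(a+B*b) - a*b
            = D*d^2 - D*e^2 + (p:ℤ_[p])^(8*l+1)*q1 - (p:ℤ_[p])^(8*l+1)*q2 := by
          linear_combination hq1 - hq2
        rw [hexp]
        exact dvd_sub (dvd_add (dvd_sub hDd hDe) (dvd_pm (by omega) _)) (dvd_pm (by omega) _)
      obtain ⟨h0, hh0⟩ := hH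
      have hpb : ¬ (p:ℤ_[p]) ∣ b := by
        intro hpb
        obtain ⟨b0, hb0⟩ := id hpb
        have hpa : (p:ℤ_[p]) ∣ a := by
          apply p_dvd_of_sq
          have hexp : a^2 = ((a+A*b)*(a+B*b) - a*b) - (A+B-1)*a*b - A*B*b^2 := by ring
          rw [hexp, hh0, hb0]
          refine dvd_sub (dvd_sub ?_ ⟨(A+B-1)*a*b0, by ring⟩) ⟨A*B*((p:ℤ_[p])*b0^2), by ring⟩
          have h9 := dvd_pm (p:=p) (show 1 ≤ 4*l+1 by omega) h0
          rwa [pow_one] at h9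
        have hpc : (p:ℤ_[p]) ∣ c := by
          apply p_dvd_of_sq
          have hexp : c^2 = (c^2 - D*d^2 - a*b) + D*d^2 + a*b := by ring
          rw [hexp, hq1, hDuD, hb0]
          refine dvd_add (dvd_add ?_ ⟨uD*d^2, by ring⟩) ⟨a*b0, by ring⟩
          have h9 := dvd_pm (p:=p) (show 1 ≤ 8*l+1 by omega) q1
          rwa [pow_one] at h9
        have hpd : (p:ℤ_[p]) ∣ d := by
          refine dvd_trans ?_ hd2l
          simpa using pow_dvd_pow (p:ℤ_[p]) (by omega : 1 ≤ 2*l)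
        have hpe : (p:ℤ_[p]) ∣ e := by
          refine dvd_trans ?_ he2l
          simpa using pow_dvd_pow (p:ℤ_[p]) (by omega : 1 ≤ 2*l)
        rcases hprim with h|h|h|h|h
        exacts [h hpa, h hpb, h hpc, h hpd, h hpe]
      have hbu := unit_of_not_dvd hpb
      obtain ⟨b', hbb'⟩ := hbu.exists_right_inv
      have hσ₀ : ¬ (p:ℤ_[p])^(l+1) ∣ (2*a + (A+B-1)*b) := by
        intro hcon
        apply hG
        have hGb2 : (p:ℤ_[p])^(l+1) ∣ ((A-B)^2 - 2*(A+B) + 1)*b^2 := by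
          have hexp : ((A-B)^2 - 2*(A+B) + 1)*b^2
              = (2*a + (A+B-1)*b)*(2*a + (A+B-1)*b) - 4*((a+A*b)*(a+B*b) - a*b) := by ring
          rw [hexp, hh0]
          exact dvd_sub (hcon.mul_right _) ((dvd_pm (by omega) _).mul_left 4)
        obtain ⟨t, ht⟩ := hGb2
        exact ⟨t*(b'*b'), by
          linear_combination (b'*b')*ht - (((A-B)^2 - 2*(A+B) + 1))*(b*b'+1)*hbb'⟩
      obtain ⟨m, hm, ws, hwsu, hsw⟩ := factor l hσ₀
      obtain ⟨ws', hws⟩ := hwsu.exists_right_inv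
      have hcond : (p:ℤ_[p]) * (2*a + (A+B-1)*b)^2 ∣ (p:ℤ_[p])^(4*l+1) * (-4*h0) :=
        dvd_shift_cond hsw hws rfl (by omega)
      obtain ⟨σ, u, hu, hσ2, hσu, v, hv, hσv⟩ := sqrt_shift hp2 hcond
      obtain ⟨uu', huu⟩ := hu.exists_right_inv
      have hσG : σ^2 = ((A-B)^2 - 2*(A+B) + 1)*b^2 := by
        linear_combination hσ2 + 4*hh0
      have hσu' : ((p:ℤ_[p])^m * ws) * ((σ - (2*a + (A+B-1)*b))*u)
          = (p:ℤ_[p])^(m + (4*l+1-m)) * (-4*h0) := by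
        rw [← hsw, show m + (4*l+1-m) = 4*l+1 by omega]
        linear_combination hσu
      have hext : (σ - (2*a + (A+B-1)*b))*u = (p:ℤ_[p])^(4*l+1-m) * ((-4*h0) * ws') :=
        extract hws hσu'
      have hστ : σ - (2*a + (A+B-1)*b) = (p:ℤ_[p])^(4*l+1-m) * ((-4*h0) * ws') * uu' := by
        linear_combination uu' * hext - (σ - (2*a + (A+B-1)*b)) * huu
      set δ : ℤ_[p] := (p:ℤ_[p])^(4*l+1-m) * (-2*h0*ws'*uu') with hdd
      have hδeq : σ - (2*a + (A+B-1)*b) = 2*δ := by rw [hdd]; linear_combination hστ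
      have hδdvd : (p:ℤ_[p])^(3*l+1) ∣ δ := by rw [hdd]; exact dvd_pm (by omega) _
      have hkey : 2*(a+δ) + (A+B-1)*b = σ := by linear_combination -hδeq
      have h4r : (4:ℤ_[p])*((a+δ)^2 + (A+B-1)*((a+δ)*b) + A*B*b^2) = 0 := by
        linear_combination (2*(a+δ)+(A+B-1)*b+σ) * hkey + hσG
      have hroot : (a+δ)^2 + (A+B-1)*((a+δ)*b) + A*B*b^2 = 0 := by
        rcases mul_eq_zero.mp h4r with h|h
        · exact absurd h h4nz
        · exact h
      have hR2 : (a+δ)*b = c^2 + (-(D*d^2) - (p:ℤ_[p])^(8*l+1)*q1 + δ*b) := by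
        linear_combination -hq1
      have hR2dvd : (p:ℤ_[p])^(3*l+1) ∣ (-(D*d^2) - (p:ℤ_[p])^(8*l+1)*q1 + δ*b) := by
        refine dvd_add (dvd_sub (dvd_neg.mpr ?_) (dvd_pm (by omega) _)) (hδdvd.mul_right b)
        exact dvd_trans (pow_dvd_pow _ (by omega)) hDd
      obtain ⟨r2, hr2⟩ := hR2dvd
      by_cases hc : (p:ℤ_[p])^(l + l/2 + 1) ∣ c
      · exfalso
        have hc2 : (p:ℤ_[p])^(3*l+1) ∣ c^2 := by
          obtain ⟨c0, hc0⟩ := hc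
          rw [hc0]
          refine dvd_trans (pow_dvd_pow _ (by omega : 3*l+1 ≤ (l+l/2+1) + (l+l/2+1))) ?_
          exact ⟨c0^2, by rw [pow_add]; ring⟩
        have hab : (p:ℤ_[p])^(3*l+1) ∣ a*b := by
          have hexp : a*b = c^2 - D*d^2 - (c^2 - D*d^2 - a*b) := by ring
          rw [hexp, hq1]
          exact dvd_sub (dvd_sub hc2 (dvd_trans (pow_dvd_pow _ (by omega)) hDd))
            (dvd_pm (by omega) _)
        have haa : (p:ℤ_[p])^(3*l+1) ∣ a := by
          obtain ⟨t, ht⟩ := hab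
          exact ⟨t*b', by linear_combination b'*ht - a*hbb'⟩
        have hABb2 : (p:ℤ_[p])^(3*l+1) ∣ A*B*b^2 := by
          have hexp : A*B*b^2 = ((a+A*b)*(a+B*b) - a*b) - a*a - (A+B-1)*(a*b) := by ring
          rw [hexp, hh0]
          refine dvd_sub (dvd_sub (dvd_pm (by omega) _) ?_) (hab.mul_left _)
          obtain ⟨t, ht⟩ := haa
          rw [ht]; exact dvd_pm2 (by omega) _ _
        have hAB2 : (p:ℤ_[p])^(3*l+1) ∣ A*B := by
          obtain ⟨t, ht⟩ := hABb2
          exact ⟨t*(b'*b'), by linear_combination (b'*b')*ht - (A*B)*(b*b'+1)*hbb'⟩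
        obtain ⟨i, hi, wA, hwAu, hAw⟩ := factor l hA
        obtain ⟨j, hj, wB, hwBu, hBw⟩ := factor l hB
        obtain ⟨wA', hwA⟩ := hwAu.exists_right_inv
        obtain ⟨wB', hwB⟩ := hwBu.exists_right_inv
        obtain ⟨t, ht⟩ := hAB2
        rw [hAw, hBw] at ht
        have hABeq : ((p:ℤ_[p])^(i+j) * (wA*wB)) * 1
            = (p:ℤ_[p])^((i+j) + (3*l+1-(i+j))) * t := by
          rw [pow_add, show (i+j) + (3*l+1-(i+j)) = 3*l+1 by omega]
          linear_combination ht
        have hone : (1:ℤ_[p]) = (p:ℤ_[p])^(3*l+1-(i+j)) * (t * (wA'*wB')) :=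
          extract (by linear_combination (wB*wB')*hwA + hwB) hABeq
        have hdvd1 : (p:ℤ_[p]) ∣ 1 := by
          rw [hone]
          refine dvd_trans ?_ (dvd_mul_right _ _)
          simpa using pow_dvd_pow (p:ℤ_[p]) (by omega : 1 ≤ 3*l+1-(i+j))
        exact (PadicInt.prime_p (p:=p)).not_unit (isUnit_of_dvd_one hdvd1)
      · have hc' : ¬ (p:ℤ_[p])^((l+l/2)+1) ∣ c := by
          rwa [show (l+l/2)+1 = l+l/2+1 by omega]
        obtain ⟨n, hn, wc, hwcu, hcw⟩ := factor (l+l/2) hc'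
        obtain ⟨wc', hwc⟩ := hwcu.exists_right_inv
        have hcond2 : (p:ℤ_[p]) * c^2 ∣ (p:ℤ_[p])^(3*l+1) * r2 :=
          dvd_shift_cond hcw hwc rfl (by omega)
        obtain ⟨c1, u1, hu1, hc1, hc1u, v1, hv1, hc1v⟩ := sqrt_shift hp2 hcond2
        have hfin : c1^2 = (a+δ)*b := by
          rw [hc1, ← hr2]; linear_combination -hR2
        exact ⟨a+δ, b, c1, 0, 0, Or.inr (Or.inl hbu.ne_zero),
          by linear_combination hfin, by linear_combination hfin - hroot⟩
    · -- CASE II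
      have he' : ¬ (p:ℤ_[p])^((2*l-1)+1) ∣ e := by rwa [show 2*l-1+1 = 2*l by omega]
      by_cases hb : (p:ℤ_[p])^(2*l+1) ∣ b
      · by_cases ha : (p:ℤ_[p])^(2*l+1) ∣ a
        · -- all divisible: contradiction
          exfalso
          have hpa : (p:ℤ_[p]) ∣ a := by
            refine dvd_trans ?_ ha
            simpa using pow_dvd_pow (p:ℤ_[p]) (by omega : 1 ≤ 2*l+1)
          have hpb : (p:ℤ_[p]) ∣ b := by
            refine dvd_trans ?_ hb
            simpa using pow_dvd_pow (p:ℤ_[p]) (by omega : 1 ≤ 2*l+1)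
          have hpd : (p:ℤ_[p]) ∣ d := by
            refine dvd_trans ?_ hd2l
            simpa using pow_dvd_pow (p:ℤ_[p]) (by omega : 1 ≤ 2*l)
          obtain ⟨a0, ha0⟩ := id hpa
          obtain ⟨b0, hb0⟩ := id hpb
          obtain ⟨d0, hd0⟩ := id hpd
          have hc2 : (p:ℤ_[p])^2 ∣ c^2 := by
            refine ⟨(p:ℤ_[p])^(8*l-1)*q1 + uD*(p:ℤ_[p])*d0^2 + a0*b0, ?_⟩
            have : c^2 = (c^2 - D*d^2 - a*b) + D*d^2 + a*b := by ring
            rw [this, hq1, hDuD, ha0, hb0, hd0,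
              show (8*l+1) = 2 + (8*l-1) by omega, pow_add]
            ring
          have hpc : (p:ℤ_[p]) ∣ c := by
            apply p_dvd_of_sq
            refine dvd_trans ?_ hc2
            simpa using pow_dvd_pow (p:ℤ_[p]) (by omega : 1 ≤ 2)
          obtain ⟨c0, hc0⟩ := id hpc
          have hpe : (p:ℤ_[p]) ∣ e := by
            have he2 : (p:ℤ_[p])^2 ∣ D*e^2 := by
              refine ⟨c0^2 - (a0+A*b0)*(a0+B*b0) - (p:ℤ_[p])^(8*l-1)*q2, ?_⟩
              have : D*e^2 = c^2 - (a+A*b)*(a+B*b) - (c^2 - D*e^2 - (a+A*b)*(a+B*b)) := by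
                ring
              rw [this, hq2, hc0, ha0, hb0, show (8*l+1) = 2 + (8*l-1) by omega, pow_add]
              ring
            obtain ⟨t, ht⟩ := he2
            rw [hDuD] at ht
            have h5 : (p:ℤ_[p]) * (uD * e^2) = (p:ℤ_[p]) * ((p:ℤ_[p]) * t) := by
              linear_combination ht
            have h6 : uD * e^2 = (p:ℤ_[p]) * t := mul_left_cancel₀ pnz h5
            exact p_dvd_of_sq ⟨t * uD', by linear_combination uD' * h6 - e^2 * huD'⟩
          rcases hprim with h|h|h|h|h
          exacts [h hpa, h hpb, h hpc, h hpd, h hpe]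
        · -- a has small valuation: modify b
          obtain ⟨m, hm, wa, hwau, haw⟩ := factor (2*l) ha
          obtain ⟨wa', hwa⟩ := hwau.exists_right_inv
          have hsplit : (p:ℤ_[p])^(8*l+1) = (p:ℤ_[p])^m * (p:ℤ_[p])^(8*l+1-m) := by
            rw [← pow_add]; congr 1; omega
          set δ : ℤ_[p] := (p:ℤ_[p])^(8*l+1-m) * q1 * wa' with hdd
          have hδ : a * δ = (p:ℤ_[p])^(8*l+1) * q1 := by
            rw [hdd, haw, hsplit]
            linear_combination ((p:ℤ_[p])^m * (p:ℤ_[p])^(8*l+1-m) * q1) * hwa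
          have hδdvd : (p:ℤ_[p])^(6*l+1) ∣ δ := by
            refine ⟨(p:ℤ_[p])^(8*l+1-m-(6*l+1)) * q1 * wa', ?_⟩
            rw [hdd, show (p:ℤ_[p])^(8*l+1-m) = (p:ℤ_[p])^(6*l+1) * (p:ℤ_[p])^(8*l+1-m-(6*l+1))
              by rw [← pow_add]; congr 1; omega]
            ring
          have heq1 : c^2 - D*d^2 - a*(b+δ) = 0 := by linear_combination hq1 - hδ
          have hQ2' : (p:ℤ_[p])^(6*l+1) ∣ (c^2 - D*e^2 - (a+A*(b+δ))*(a+B*(b+δ))) := by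
            have hexp : c^2 - D*e^2 - (a+A*(b+δ))*(a+B*(b+δ)) =
                (c^2 - D*e^2 - (a+A*b)*(a+B*b)) - (A*(a+B*b) + B*(a+A*b))*δ - ((A*B*δ)*δ) := by
              ring
            rw [hexp, hq2]
            exact dvd_sub (dvd_sub (dvd_trans (pow_dvd_pow _ (by omega)) ⟨q2, rfl⟩)
              (hδdvd.mul_left _)) ((hδdvd.mul_left (A*B)).mul_right δ)
          obtain ⟨e1, he1, he1nz⟩ := solve_quad hp2 hDuD huD' he'
            (show (p:ℤ_[p])^(6*l+1) ∣ ((c^2 - (a+A*(b+δ))*(a+B*(b+δ))) - D*e^2) by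
              rw [show (c^2 - (a+A*(b+δ))*(a+B*(b+δ))) - D*e^2
                  = c^2 - D*e^2 - (a+A*(b+δ))*(a+B*(b+δ)) by ring]
              exact hQ2') (by omega)
          exact ⟨a, b+δ, c, d, e1, Or.inr (Or.inr (Or.inr (Or.inr he1nz))), heq1,
            by linear_combination -he1⟩
      · -- b has small valuation: modify a
        obtain ⟨m, hm, wb, hwbu, hbw⟩ := factor (2*l) hb
        obtain ⟨wb', hwb⟩ := hwbu.exists_right_inv
        have hsplit : (p:ℤ_[p])^(8*l+1) = (p:ℤ_[p])^m * (p:ℤ_[p])^(8*l+1-m) := by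
          rw [← pow_add]; congr 1; omega
        set δ : ℤ_[p] := (p:ℤ_[p])^(8*l+1-m) * q1 * wb' with hdd
        have hδ : b * δ = (p:ℤ_[p])^(8*l+1) * q1 := by
          rw [hdd, hbw, hsplit]
          linear_combination ((p:ℤ_[p])^m * (p:ℤ_[p])^(8*l+1-m) * q1) * hwb
        have hδdvd : (p:ℤ_[p])^(6*l+1) ∣ δ := by
          refine ⟨(p:ℤ_[p])^(8*l+1-m-(6*l+1)) * q1 * wb', ?_⟩
          rw [hdd, show (p:ℤ_[p])^(8*l+1-m) = (p:ℤ_[p])^(6*l+1) * (p:ℤ_[p])^(8*l+1-m-(6*l+1))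
            by rw [← pow_add]; congr 1; omega]
          ring
        have heq1 : c^2 - D*d^2 - (a+δ)*b = 0 := by linear_combination hq1 - hδ
        have hQ2' : (p:ℤ_[p])^(6*l+1) ∣ (c^2 - D*e^2 - ((a+δ)+A*b)*((a+δ)+B*b)) := by
          have hexp : c^2 - D*e^2 - ((a+δ)+A*b)*((a+δ)+B*b) =
              (c^2 - D*e^2 - (a+A*b)*(a+B*b)) - (2*a+(A+B)*b)*δ - (δ*δ) := by ring
          rw [hexp, hq2]
          exact dvd_sub (dvd_sub (dvd_trans (pow_dvd_pow _ (by omega)) ⟨q2, rfl⟩)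
            (hδdvd.mul_left _)) (hδdvd.mul_right δ)
        obtain ⟨e1, he1, he1nz⟩ := solve_quad hp2 hDuD huD' he'
          (show (p:ℤ_[p])^(6*l+1) ∣ ((c^2 - ((a+δ)+A*b)*((a+δ)+B*b)) - D*e^2) by
            rw [show (c^2 - ((a+δ)+A*b)*((a+δ)+B*b)) - D*e^2
                = c^2 - D*e^2 - ((a+δ)+A*b)*((a+δ)+B*b) by ring]
            exact hQ2') (by omega)
        exact ⟨a+δ, b, c, d, e1, Or.inr (Or.inr (Or.inr (Or.inr he1nz))), heq1,
          by linear_combination -he1⟩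
  · by_cases he2l : (p:ℤ_[p])^(2*l) ∣ e
    · -- CASE III : d small valuation, e large
      have hd' : ¬ (p:ℤ_[p])^((2*l-1)+1) ∣ d := by rwa [show 2*l-1+1 = 2*l by omega]
      by_cases hsog : (p:ℤ_[p])^(4*l+1) ∣ (2*a + (A+B)*b)
      · by_cases htau : (p:ℤ_[p])^(4*l+1) ∣ (2*A*B*b + (A+B)*a)
        · by_cases hcc : (p:ℤ_[p])^(4*l+1) ∣ c
          · -- III.d : contradiction
            exfalso
            obtain ⟨e0, he0⟩ := id he2l
            have hDe : (p:ℤ_[p])^(4*l+1) ∣ D*e^2 := by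
              rw [hDuD, he0, De2_eq]
              exact dvd_pm (by omega) _
            have huw : (p:ℤ_[p])^(4*l+1) ∣ (a+A*b)*(a+B*b) := by
              have hexp : (a+A*b)*(a+B*b)
                  = c*c - D*e^2 - (c^2 - D*e^2 - (a+A*b)*(a+B*b)) := by ring
              rw [hexp, hq2]
              exact dvd_sub (dvd_sub (hcc.mul_right c) hDe) (dvd_pm (by omega) _)
            have hu2 : (p:ℤ_[p])^(4*l+1) ∣ (a+A*b)^2 := by
              have hexp : (a+A*b)^2 = (a+A*b)*(2*a+(A+B)*b) - (a+A*b)*(a+B*b) := by ring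
              rw [hexp]
              exact dvd_sub (hsog.mul_left _) huw
            have hu : (p:ℤ_[p])^(2*l+1) ∣ (a+A*b) :=
              pow_dvd_sq (2*l) (by rwa [show 2*(2*l)+1 = 4*l+1 by omega])
            obtain ⟨i, hi, wab, hwabu, habw⟩ := factor l hAB
            obtain ⟨wab', hwab⟩ := hwabu.exists_right_inv
            have hBA : (p:ℤ_[p])^(4*l+1) ∣ (A-B)*(a+A*b) := by
              have hexp : (A-B)*(a+A*b) = A*(2*a+(A+B)*b) - (2*A*B*b + (A+B)*a) := by ring
              rw [hexp]; exact dvd_sub (hsog.mul_left _) htau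
            obtain ⟨t1, ht1⟩ := hBA
            rw [habw, show (4*l+1) = i + (4*l+1-i) by omega] at ht1
            have hext : (a+A*b) = (p:ℤ_[p])^(4*l+1-i) * (t1 * wab') := extract hwab ht1
            have hu3 : (p:ℤ_[p])^(3*l+1) ∣ (a+A*b) := by
              rw [hext]; exact dvd_pm (by omega) _
            have hw3 : (p:ℤ_[p])^(3*l+1) ∣ (a+B*b) := by
              have hexp : (a+B*b) = (2*a+(A+B)*b) - (a+A*b) := by ring
              rw [hexp]
              exact dvd_sub (dvd_trans (pow_dvd_pow _ (by omega)) hsog) hu3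
            have hABb : (p:ℤ_[p])^(3*l+1) ∣ (A-B)*b := by
              have hexp : (A-B)*b = (a+A*b) - (a+B*b) := by ring
              rw [hexp]; exact dvd_sub hu3 hw3
            obtain ⟨t2, ht2⟩ := hABb
            rw [habw, show (3*l+1) = i + (3*l+1-i) by omega] at ht2
            have hbext : b = (p:ℤ_[p])^(3*l+1-i) * (t2 * wab') := extract hwab ht2
            have hb3 : (p:ℤ_[p])^(2*l+1) ∣ b := by
              rw [hbext]; exact dvd_pm (by omega) _
            have ha3 : (p:ℤ_[p])^(2*l+1) ∣ a := by
              have hexp : a = (a+A*b) - A*b := by ring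
              rw [hexp]
              exact dvd_sub (dvd_trans (pow_dvd_pow _ (by omega)) hu3) (hb3.mul_left A)
            obtain ⟨a2, ha2⟩ := ha3
            obtain ⟨b2, hb2⟩ := hb3
            obtain ⟨c2, hc2⟩ := id hcc
            have hDd : (p:ℤ_[p])^(4*l+2) ∣ D*d^2 := by
              have hexp : D*d^2 = c*c - a*b - (c^2 - D*d^2 - a*b) := by ring
              rw [hexp, hq1, hc2, ha2, hb2]
              exact dvd_sub (dvd_sub (dvd_pm2 (by omega) _ _) (dvd_pm2 (by omega) _ _))
                (dvd_pm (by omega) _)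
            obtain ⟨t3, ht3⟩ := hDd
            rw [hDuD, show (4*l+2) = 1 + (4*l+1) by omega, pow_add, pow_one] at ht3
            have h5 : (p:ℤ_[p]) * (uD*d^2) = (p:ℤ_[p]) * ((p:ℤ_[p])^(4*l+1) * t3) := by
              linear_combination ht3
            have h6 : uD*d^2 = (p:ℤ_[p])^(4*l+1) * t3 := mul_left_cancel₀ pnz h5
            have hd2 : (p:ℤ_[p])^(4*l+1) ∣ d^2 :=
              ⟨t3*uD', by linear_combination uD' * h6 - d^2 * huD'⟩
            have hdd : (p:ℤ_[p])^(2*l+1) ∣ d :=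
              pow_dvd_sq (2*l) (by rwa [show 2*(2*l)+1 = 4*l+1 by omega])
            exact hd2l (dvd_trans (pow_dvd_pow _ (by omega)) hdd)
          · -- III.c : adjust c
            obtain ⟨n, hn, wc, hwcu, hcw⟩ := factor (4*l) hcc
            obtain ⟨wc', hwc⟩ := hwcu.exists_right_inv
            have hcond : (p:ℤ_[p]) * c^2 ∣ (p:ℤ_[p])^(8*l+1) * (-q2) :=
              dvd_shift_cond hcw hwc rfl (by omega)
            obtain ⟨c1, u, hu, hc1, hcu, v, hv, hcv⟩ := sqrt_shift hp2 hcond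
            have heq2 : c1^2 - D*e^2 - (a+A*b)*(a+B*b) = 0 := by
              linear_combination hc1 + hq2
            have hQ1' : (p:ℤ_[p])^(4*l+1) ∣ ((c1^2 - a*b) - D*d^2) := by
              have hexp : (c1^2 - a*b) - D*d^2
                  = (c^2 - D*d^2 - a*b) + (p:ℤ_[p])^(8*l+1)*(-q2) := by
                linear_combination hc1
              rw [hexp, hq1]
              exact dvd_add (dvd_pm (by omega) _) (dvd_pm (by omega) _)
            obtain ⟨d1, hd1, hd1nz⟩ := solve_quad hp2 hDuD huD' hd' hQ1' (by omega)
            exact ⟨a, b, c1, d1, e, Or.inr (Or.inr (Or.inr (Or.inl hd1nz))),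
              by linear_combination -hd1, heq2⟩
        · -- III.b : adjust b
          have hAnz : A ≠ 0 := fun h => hA (h ▸ dvd_zero _)
          have hBnz : B ≠ 0 := fun h => hB (h ▸ dvd_zero _)
          obtain ⟨n, hn, wt, hwtu, htw⟩ := factor (4*l) htau
          obtain ⟨wt', hwt⟩ := hwtu.exists_right_inv
          have hcond : (p:ℤ_[p]) * (2*A*B*b + (A+B)*a)^2 ∣ (p:ℤ_[p])^(8*l+1) * (4*A*B*q2) :=
            dvd_shift_cond htw hwt rfl (by omega)
          obtain ⟨σ, u, hu, hσ2, hσu, v, hv, hσv⟩ := sqrt_shift hp2 hcond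
          obtain ⟨uu', huu⟩ := hu.exists_right_inv
          have hσu' : ((p:ℤ_[p])^n * wt) * ((σ - (2*A*B*b + (A+B)*a))*u)
              = (p:ℤ_[p])^(n + (8*l+1-n)) * (4*A*B*q2) := by
            rw [← htw, show n + (8*l+1-n) = 8*l+1 by omega]
            linear_combination hσu
          have hext : (σ - (2*A*B*b + (A+B)*a))*u
              = (p:ℤ_[p])^(8*l+1-n) * ((4*A*B*q2) * wt') := extract hwt hσu'
          have hστ : σ - (2*A*B*b + (A+B)*a)
              = (p:ℤ_[p])^(8*l+1-n) * ((4*A*B*q2) * wt') * uu' := by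
            linear_combination uu' * hext - (σ - (2*A*B*b + (A+B)*a)) * huu
          set δ : ℤ_[p] := (p:ℤ_[p])^(8*l+1-n) * (2*q2*wt'*uu') with hdd
          have hδeq : σ - (2*A*B*b + (A+B)*a) = 2*A*B*δ := by
            rw [hdd]; linear_combination hστ
          have hδdvd : (p:ℤ_[p])^(4*l+1) ∣ δ := by
            rw [hdd]; exact dvd_pm (by omega) _
          have hkey : 2*A*B*(b+δ) + (A+B)*a = σ := by linear_combination -hδeq
          have hσ2' : σ^2 = (A-B)^2*a^2 + 4*A*B*(c^2 - D*e^2) := by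
            linear_combination hσ2 - 4*A*B*hq2
          have h4ab : (4*A*B)*(c^2 - D*e^2 - (a+A*(b+δ))*(a+B*(b+δ))) = 0 := by
            linear_combination (-(2*A*B*(b+δ)+(A+B)*a+σ)) * hkey - hσ2'
          have heq2 : c^2 - D*e^2 - (a+A*(b+δ))*(a+B*(b+δ)) = 0 := by
            rcases mul_eq_zero.mp h4ab with h|h
            · exact absurd h (mul_ne_zero (mul_ne_zero h4nz hAnz) hBnz)
            · exact h
          have hQ1' : (p:ℤ_[p])^(4*l+1) ∣ ((c^2 - a*(b+δ)) - D*d^2) := by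
            have hexp : (c^2 - a*(b+δ)) - D*d^2 = (c^2 - D*d^2 - a*b) - a*δ := by ring
            rw [hexp, hq1]
            exact dvd_sub (dvd_pm (by omega) _) (hδdvd.mul_left a)
          obtain ⟨d1, hd1, hd1nz⟩ := solve_quad hp2 hDuD huD' hd' hQ1' (by omega)
          exact ⟨a, b+δ, c, d1, e, Or.inr (Or.inr (Or.inr (Or.inl hd1nz))),
            by linear_combination -hd1, heq2⟩
      · -- III.a : adjust a
        obtain ⟨n, hn, ws, hwsu, hsw⟩ := factor (4*l) hsog
        obtain ⟨ws', hws⟩ := hwsu.exists_right_inv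
        have hcond : (p:ℤ_[p]) * (2*a + (A+B)*b)^2 ∣ (p:ℤ_[p])^(8*l+1) * (4*q2) :=
          dvd_shift_cond hsw hws rfl (by omega)
        obtain ⟨σ, u, hu, hσ2, hσu, v, hv, hσv⟩ := sqrt_shift hp2 hcond
        obtain ⟨uu', huu⟩ := hu.exists_right_inv
        have hσu' : ((p:ℤ_[p])^n * ws) * ((σ - (2*a + (A+B)*b))*u)
            = (p:ℤ_[p])^(n + (8*l+1-n)) * (4*q2) := by
          rw [← hsw, show n + (8*l+1-n) = 8*l+1 by omega]
          linear_combination hσu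
        have hext : (σ - (2*a + (A+B)*b))*u
            = (p:ℤ_[p])^(8*l+1-n) * ((4*q2) * ws') := extract hws hσu'
        have hστ : σ - (2*a + (A+B)*b)
            = (p:ℤ_[p])^(8*l+1-n) * ((4*q2) * ws') * uu' := by
          linear_combination uu' * hext - (σ - (2*a + (A+B)*b)) * huu
        set δ : ℤ_[p] := (p:ℤ_[p])^(8*l+1-n) * (2*q2*ws'*uu') with hdd
        have hδeq : σ - (2*a + (A+B)*b) = 2*δ := by
          rw [hdd]; linear_combination hστ
        have hδdvd : (p:ℤ_[p])^(4*l+1) ∣ δ := by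
          rw [hdd]; exact dvd_pm (by omega) _
        have hkey : 2*(a+δ) + (A+B)*b = σ := by linear_combination -hδeq
        have hσ2' : σ^2 = (A-B)^2*b^2 + 4*(c^2 - D*e^2) := by
          linear_combination hσ2 - 4*hq2
        have h4ab : (4:ℤ_[p])*(c^2 - D*e^2 - ((a+δ)+A*b)*((a+δ)+B*b)) = 0 := by
          linear_combination (-(2*(a+δ)+(A+B)*b+σ)) * hkey - hσ2'
        have heq2 : c^2 - D*e^2 - ((a+δ)+A*b)*((a+δ)+B*b) = 0 := by
          rcases mul_eq_zero.mp h4ab with h|h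
          · exact absurd h h4nz
          · exact h
        have hQ1' : (p:ℤ_[p])^(4*l+1) ∣ ((c^2 - (a+δ)*b) - D*d^2) := by
          have hexp : (c^2 - (a+δ)*b) - D*d^2 = (c^2 - D*d^2 - a*b) - δ*b := by ring
          rw [hexp, hq1]
          exact dvd_sub (dvd_pm (by omega) _) (hδdvd.mul_right b)
        obtain ⟨d1, hd1, hd1nz⟩ := solve_quad hp2 hDuD huD' hd' hQ1' (by omega)
        exact ⟨a+δ, b, c, d1, e, Or.inr (Or.inr (Or.inr (Or.inl hd1nz))),
          by linear_combination -hd1, heq2⟩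
    · -- CASE I
      have hd' : ¬ (p:ℤ_[p])^((2*l-1)+1) ∣ d := by
        rwa [show 2*l-1+1 = 2*l by omega]
      have he' : ¬ (p:ℤ_[p])^((2*l-1)+1) ∣ e := by
        rwa [show 2*l-1+1 = 2*l by omega]
      obtain ⟨d1, hd1, hd1nz⟩ := solve_quad hp2 hDuD huD' hd'
        (show (p:ℤ_[p])^(8*l+1) ∣ ((c^2 - a*b) - D*d^2) by
          rw [show (c^2 - a*b) - D*d^2 = c^2 - D*d^2 - a*b by ring]; exact h1)
        (by omega)
      obtain ⟨e1, he1, he1nz⟩ := solve_quad hp2 hDuD huD' he'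
        (show (p:ℤ_[p])^(8*l+1) ∣ ((c^2 - (a+A*b)*(a+B*b)) - D*e^2) by
          rw [show (c^2 - (a+A*b)*(a+B*b)) - D*e^2 = c^2 - D*e^2 - (a+A*b)*(a+B*b) by ring]
          exact h2)
        (by omega)
      exact ⟨a, b, c, d1, e1, Or.inr (Or.inr (Or.inr (Or.inl hd1nz))),
        by linear_combination -hd1, by linear_combination -he1⟩

lemma forward (N : ℕ) (hN : 1 ≤ N) (D A B : ℤ)
    (h : ∃ t : Fin 5 → ℚ_[p], t ≠ 0 ∧
      (t 2)^2 - (D:ℚ_[p])*(t 3)^2 - t 0 * t 1 = 0 ∧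
      (t 2)^2 - (D:ℚ_[p])*(t 4)^2 - (t 0 + (A:ℚ_[p])*t 1)*(t 0 + (B:ℚ_[p])*t 1) = 0) :
    ∃ T : Fin 5 → ℤ, (∃ i, ¬ ((p:ℤ) ∣ T i)) ∧
      ((p:ℤ)^N) ∣ ((T 2)^2 - D*(T 3)^2 - T 0 * T 1) ∧
      ((p:ℤ)^N) ∣ ((T 2)^2 - D*(T 4)^2 - (T 0 + A*(T 1))*(T 0 + B*(T 1))) := by
  obtain ⟨t, ht0, ht1, ht2⟩ := h
  obtain ⟨i₀, -, hmax⟩ := Finset.exists_max_image Finset.univ (fun i => ‖t i‖)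
    ⟨0, Finset.mem_univ 0⟩
  have hg : t i₀ ≠ 0 := by
    obtain ⟨j, hj⟩ := Function.ne_iff.mp ht0
    intro h0
    have h1 := hmax j (Finset.mem_univ j)
    rw [h0, norm_zero] at h1
    exact hj (norm_le_zero_iff.mp h1)
  set g : ℚ_[p] := t i₀ with hgdef
  have hnorm : ∀ i, ‖t i / g‖ ≤ 1 := by
    intro i
    rw [norm_div]
    exact div_le_one_of_le₀ (hmax i (Finset.mem_univ i)) (norm_nonneg _)
  set s : Fin 5 → ℤ_[p] := fun i => ⟨t i / g, hnorm i⟩ with hsdef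
  have hscoe : ∀ i, ((s i : ℤ_[p]) : ℚ_[p]) = t i / g := fun i => rfl
  have hQ1s : (s 2)^2 - (D:ℤ_[p])*(s 3)^2 - s 0 * s 1 = 0 := by
    apply Subtype.coe_injective
    push_cast
    linear_combination ht1 / g^2
  have hQ2s : (s 2)^2 - (D:ℤ_[p])*(s 4)^2 - (s 0 + (A:ℤ_[p])*(s 1)) * (s 0 + (B:ℤ_[p])*(s 1)) = 0 := by
    apply Subtype.coe_injective
    push_cast
    linear_combination ht2 / g^2
  have hsone : s i₀ = 1 := by
    have h9 : ((s i₀ : ℤ_[p]):ℚ_[p]) = ((1:ℤ_[p]):ℚ_[p]) := by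
      rw [hscoe, PadicInt.coe_one]
      exact div_self hg
    exact Subtype.coe_injective h9
  set T : Fin 5 → ℤ := fun i => ((s i).appr N : ℤ) with hTdef
  have hdiff : ∀ i, (p:ℤ_[p])^N ∣ (s i - ((T i : ℤ) : ℤ_[p])) := by
    intro i
    have := PadicInt.appr_spec N (s i)
    rw [Ideal.mem_span_singleton] at this
    rw [hTdef]
    push_cast
    exact this
  refine ⟨T, ⟨i₀, ?_⟩, ?_, ?_⟩
  · intro hpd
    have h1 : (p:ℤ_[p]) ∣ ((T i₀ : ℤ) : ℤ_[p]) := by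
      have := (PadicInt.pow_p_dvd_int_iff (p := p) 1 (T i₀)).mpr (by simpa using hpd)
      simpa using this
    have h2 : (p:ℤ_[p]) ∣ s i₀ := by
      have h3 : (s i₀ : ℤ_[p]) = (s i₀ - ((T i₀ : ℤ) : ℤ_[p])) + ((T i₀ : ℤ) : ℤ_[p]) := by ring
      rw [h3]
      refine dvd_add (dvd_trans ?_ (hdiff i₀)) h1
      simpa using pow_dvd_pow (p:ℤ_[p]) (by omega : 1 ≤ N)
    rw [hsone] at h2
    exact (PadicInt.prime_p (p:=p)).not_unit (isUnit_of_dvd_one h2)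
  · rw [show ((p:ℤ))^N = ((p^N : ℤ)) by push_cast; ring, ← PadicInt.pow_p_dvd_int_iff]
    have hcast : (((T 2)^2 - D*(T 3)^2 - T 0 * T 1 : ℤ) : ℤ_[p])
        = (((T 2:ℤ):ℤ_[p]))^2 - (D:ℤ_[p])*(((T 3:ℤ):ℤ_[p]))^2
          - ((T 0:ℤ):ℤ_[p]) * ((T 1:ℤ):ℤ_[p]) := by push_cast; ring
    rw [hcast]
    have hexp : (((T 2:ℤ):ℤ_[p]))^2 - (D:ℤ_[p])*(((T 3:ℤ):ℤ_[p]))^2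
          - ((T 0:ℤ):ℤ_[p]) * ((T 1:ℤ):ℤ_[p])
        = -((s 2 - ((T 2:ℤ):ℤ_[p]))*(s 2 + ((T 2:ℤ):ℤ_[p])))
          + (D:ℤ_[p])*((s 3 - ((T 3:ℤ):ℤ_[p]))*(s 3 + ((T 3:ℤ):ℤ_[p])))
          + ((s 0 - ((T 0:ℤ):ℤ_[p]))*(s 1) + ((T 0:ℤ):ℤ_[p])*(s 1 - ((T 1:ℤ):ℤ_[p])))
          + ((s 2)^2 - (D:ℤ_[p])*(s 3)^2 - s 0 * s 1) := by ring
    rw [hexp, hQ1s]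
    refine dvd_add (dvd_add (dvd_add (dvd_neg.mpr ((hdiff 2).mul_right _))
      (((hdiff 3).mul_right _).mul_left _)) ?_) (dvd_zero _)
    exact dvd_add ((hdiff 0).mul_right _) ((hdiff 1).mul_left _)
  · rw [show ((p:ℤ))^N = ((p^N : ℤ)) by push_cast; ring, ← PadicInt.pow_p_dvd_int_iff]
    have hcast : (((T 2)^2 - D*(T 4)^2 - (T 0 + A*(T 1))*(T 0 + B*(T 1)) : ℤ) : ℤ_[p])
        = (((T 2:ℤ):ℤ_[p]))^2 - (D:ℤ_[p])*(((T 4:ℤ):ℤ_[p]))^2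
          - (((T 0:ℤ):ℤ_[p]) + (A:ℤ_[p])*((T 1:ℤ):ℤ_[p]))
            * (((T 0:ℤ):ℤ_[p]) + (B:ℤ_[p])*((T 1:ℤ):ℤ_[p])) := by push_cast; ring
    rw [hcast]
    have hexp : (((T 2:ℤ):ℤ_[p]))^2 - (D:ℤ_[p])*(((T 4:ℤ):ℤ_[p]))^2
          - (((T 0:ℤ):ℤ_[p]) + (A:ℤ_[p])*((T 1:ℤ):ℤ_[p]))
            * (((T 0:ℤ):ℤ_[p]) + (B:ℤ_[p])*((T 1:ℤ):ℤ_[p]))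
        = -((s 2 - ((T 2:ℤ):ℤ_[p]))*(s 2 + ((T 2:ℤ):ℤ_[p])))
          + (D:ℤ_[p])*((s 4 - ((T 4:ℤ):ℤ_[p]))*(s 4 + ((T 4:ℤ):ℤ_[p])))
          + (((s 0 - ((T 0:ℤ):ℤ_[p])) + (A:ℤ_[p])*(s 1 - ((T 1:ℤ):ℤ_[p])))*(s 0 + (B:ℤ_[p])*(s 1))
            + (((T 0:ℤ):ℤ_[p]) + (A:ℤ_[p])*((T 1:ℤ):ℤ_[p]))
              * ((s 0 - ((T 0:ℤ):ℤ_[p])) + (B:ℤ_[p])*(s 1 - ((T 1:ℤ):ℤ_[p]))))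
          + ((s 2)^2 - (D:ℤ_[p])*(s 4)^2 - (s 0 + (A:ℤ_[p])*(s 1)) * (s 0 + (B:ℤ_[p])*(s 1))) := by
      ring
    rw [hexp, hQ2s]
    refine dvd_add (dvd_add (dvd_add (dvd_neg.mpr ((hdiff 2).mul_right _))
      (((hdiff 4).mul_right _).mul_left _)) ?_) (dvd_zero _)
    refine dvd_add ((dvd_add (hdiff 0) ((hdiff 1).mul_left _)).mul_right _) ?_
    exact (dvd_add (hdiff 0) ((hdiff 1).mul_left _)).mul_left _

/-- `S^(D;A,B)(K) ≠ ∅`: there is a nonzero vector `t ∈ K⁵` with `Q1(t) = Q2(t) = 0`. -/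
def hasPointBSD (K : Type*) [Field K] (D A B : ℤ) : Prop :=
  ∃ t : Fin 5 → K, t ≠ 0 ∧
    (t 2) ^ 2 - (D : K) * (t 3) ^ 2 - t 0 * t 1 = 0 ∧
    (t 2) ^ 2 - (D : K) * (t 4) ^ 2 - (t 0 + (A : K) * t 1) * (t 0 + (B : K) * t 1) = 0

theorem stmt_1 (D A B : ℤ) (p : ℕ) (hp : p.Prime) (hp2 : p ≠ 2)
    (hpD : (p : ℤ) ∣ D) (hp2D : ¬ ((p : ℤ) ^ 2 ∣ D)) (l : ℕ) (hl : 1 ≤ l)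
    (hA : ¬ ((p : ℤ) ^ (l + 1) ∣ A)) (hB : ¬ ((p : ℤ) ^ (l + 1) ∣ B))
    (hAB : ¬ ((p : ℤ) ^ (l + 1) ∣ (A - B)))
    (hG : ¬ ((p : ℤ) ^ (l + 1) ∣ (A ^ 2 - 2 * A * B + B ^ 2 - 2 * A - 2 * B + 1))) :
    hasPointBSD (@Padic p ⟨hp⟩) D A B ↔
      ∃ t : Fin 5 → ℤ, (∃ i, ¬ ((p : ℤ) ∣ t i)) ∧
        ((p : ℤ) ^ (8 * l + 1)) ∣ ((t 2) ^ 2 - D * (t 3) ^ 2 - t 0 * t 1) ∧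
        ((p : ℤ) ^ (8 * l + 1)) ∣
          ((t 2) ^ 2 - D * (t 4) ^ 2 - (t 0 + A * t 1) * (t 0 + B * t 1)) := by
  haveI : Fact p.Prime := ⟨hp⟩
  have F : ∀ (k : ℕ) (x : ℤ), ((p:ℤ)^k ∣ x) ↔ ((p:ℤ_[p])^k ∣ (x:ℤ_[p])) := by
    intro k x
    rw [PadicInt.pow_p_dvd_int_iff]
  have F1 : ∀ (x : ℤ), ((p:ℤ) ∣ x) ↔ ((p:ℤ_[p]) ∣ (x:ℤ_[p])) := by
    intro x
    have := F 1 x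
    simpa using this
  constructor
  · intro h
    exact forward (8*l+1) (by omega) D A B h
  · rintro ⟨T, ⟨i, hi⟩, hq1, hq2⟩
    have hDz : (p:ℤ_[p]) ∣ ((D:ℤ):ℤ_[p]) := (F1 D).mp hpD
    have hD2z : ¬ ((p:ℤ_[p])^2 ∣ ((D:ℤ):ℤ_[p])) := fun hcon => hp2D ((F 2 D).mpr hcon)
    have hAz : ¬ ((p:ℤ_[p])^(l+1) ∣ ((A:ℤ):ℤ_[p])) := fun hcon => hA ((F (l+1) A).mpr hcon)
    have hBz : ¬ ((p:ℤ_[p])^(l+1) ∣ ((B:ℤ):ℤ_[p])) := fun hcon => hB ((F (l+1) B).mpr hcon)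
    have hABz : ¬ ((p:ℤ_[p])^(l+1) ∣ (((A:ℤ):ℤ_[p]) - ((B:ℤ):ℤ_[p]))) := by
      intro hcon
      refine hAB ((F (l+1) (A-B)).mpr ?_)
      rwa [show (((A-B:ℤ)):ℤ_[p]) = ((A:ℤ):ℤ_[p]) - ((B:ℤ):ℤ_[p]) by push_cast; ring]
    have hGz : ¬ ((p:ℤ_[p])^(l+1) ∣
        ((((A:ℤ):ℤ_[p]) - ((B:ℤ):ℤ_[p]))^2 - 2*(((A:ℤ):ℤ_[p]) + ((B:ℤ):ℤ_[p])) + 1)) := by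
      intro hcon
      refine hG ((F (l+1) (A^2 - 2*A*B + B^2 - 2*A - 2*B + 1)).mpr ?_)
      rwa [show (((A^2 - 2*A*B + B^2 - 2*A - 2*B + 1:ℤ)):ℤ_[p])
          = (((A:ℤ):ℤ_[p]) - ((B:ℤ):ℤ_[p]))^2 - 2*(((A:ℤ):ℤ_[p]) + ((B:ℤ):ℤ_[p])) + 1
        by push_cast; ring]
    have h1z : (p:ℤ_[p])^(8*l+1) ∣
        (((T 2:ℤ):ℤ_[p])^2 - ((D:ℤ):ℤ_[p])*((T 3:ℤ):ℤ_[p])^2 - ((T 0:ℤ):ℤ_[p])*((T 1:ℤ):ℤ_[p])) := by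
      have := (F (8*l+1) ((T 2)^2 - D*(T 3)^2 - T 0 * T 1)).mp hq1
      rwa [show (((T 2)^2 - D*(T 3)^2 - T 0 * T 1 : ℤ) : ℤ_[p])
          = ((T 2:ℤ):ℤ_[p])^2 - ((D:ℤ):ℤ_[p])*((T 3:ℤ):ℤ_[p])^2 - ((T 0:ℤ):ℤ_[p])*((T 1:ℤ):ℤ_[p])
        by push_cast; ring] at this
    have h2z : (p:ℤ_[p])^(8*l+1) ∣
        (((T 2:ℤ):ℤ_[p])^2 - ((D:ℤ):ℤ_[p])*((T 4:ℤ):ℤ_[p])^2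
          - (((T 0:ℤ):ℤ_[p]) + ((A:ℤ):ℤ_[p])*((T 1:ℤ):ℤ_[p]))
            * (((T 0:ℤ):ℤ_[p]) + ((B:ℤ):ℤ_[p])*((T 1:ℤ):ℤ_[p]))) := by
      have := (F (8*l+1) ((T 2)^2 - D*(T 4)^2 - (T 0 + A*(T 1))*(T 0 + B*(T 1)))).mp hq2
      rwa [show (((T 2)^2 - D*(T 4)^2 - (T 0 + A*(T 1))*(T 0 + B*(T 1)) : ℤ) : ℤ_[p])
          = ((T 2:ℤ):ℤ_[p])^2 - ((D:ℤ):ℤ_[p])*((T 4:ℤ):ℤ_[p])^2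
            - (((T 0:ℤ):ℤ_[p]) + ((A:ℤ):ℤ_[p])*((T 1:ℤ):ℤ_[p]))
              * (((T 0:ℤ):ℤ_[p]) + ((B:ℤ):ℤ_[p])*((T 1:ℤ):ℤ_[p]))
        by push_cast; ring] at this
    have hprim5 : ¬(p:ℤ_[p]) ∣ ((T 0:ℤ):ℤ_[p]) ∨ ¬(p:ℤ_[p]) ∣ ((T 1:ℤ):ℤ_[p])
        ∨ ¬(p:ℤ_[p]) ∣ ((T 2:ℤ):ℤ_[p]) ∨ ¬(p:ℤ_[p]) ∣ ((T 3:ℤ):ℤ_[p])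
        ∨ ¬(p:ℤ_[p]) ∣ ((T 4:ℤ):ℤ_[p]) := by
      fin_cases i
      · exact Or.inl (fun hcon => hi ((F1 (T 0)).mpr hcon))
      · exact Or.inr (Or.inl (fun hcon => hi ((F1 (T 1)).mpr hcon)))
      · exact Or.inr (Or.inr (Or.inl (fun hcon => hi ((F1 (T 2)).mpr hcon))))
      · exact Or.inr (Or.inr (Or.inr (Or.inl (fun hcon => hi ((F1 (T 3)).mpr hcon)))))
      · exact Or.inr (Or.inr (Or.inr (Or.inr (fun hcon => hi ((F1 (T 4)).mpr hcon)))))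
    obtain ⟨a', b', c', d', e', hnz, he1, he2⟩ :=
      lift hp2 l hl ((D:ℤ):ℤ_[p]) ((A:ℤ):ℤ_[p]) ((B:ℤ):ℤ_[p]) hDz hD2z hAz hBz hABz hGz
        ((T 0:ℤ):ℤ_[p]) ((T 1:ℤ):ℤ_[p]) ((T 2:ℤ):ℤ_[p]) ((T 3:ℤ):ℤ_[p]) ((T 4:ℤ):ℤ_[p])
        hprim5 h1z h2z
    refine ⟨![(a':ℚ_[p]), (b':ℚ_[p]), (c':ℚ_[p]), (d':ℚ_[p]), (e':ℚ_[p])], ?_, ?_, ?_⟩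
    · rw [Function.ne_iff]
      rcases hnz with h|h|h|h|h
      · exact ⟨0, show (a':ℚ_[p]) ≠ 0 from PadicInt.coe_ne_zero.mpr h⟩
      · exact ⟨1, show (b':ℚ_[p]) ≠ 0 from PadicInt.coe_ne_zero.mpr h⟩
      · exact ⟨2, show (c':ℚ_[p]) ≠ 0 from PadicInt.coe_ne_zero.mpr h⟩
      · exact ⟨3, show (d':ℚ_[p]) ≠ 0 from PadicInt.coe_ne_zero.mpr h⟩
      · exact ⟨4, show (e':ℚ_[p]) ≠ 0 from PadicInt.coe_ne_zero.mpr h⟩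
    · show (c':ℚ_[p])^2 - (D:ℚ_[p])*(d':ℚ_[p])^2 - (a':ℚ_[p])*(b':ℚ_[p]) = 0
      have hc := congrArg ((↑·) : ℤ_[p] → ℚ_[p]) he1
      push_cast at hc
      convert hc using 2 <;> push_cast <;> ring
    · show (c':ℚ_[p])^2 - (D:ℚ_[p])*(e':ℚ_[p])^2
        - ((a':ℚ_[p]) + (A:ℚ_[p])*(b':ℚ_[p]))*((a':ℚ_[p]) + (B:ℚ_[p])*(b':ℚ_[p])) = 0
      have hc := congrArg ((↑·) : ℤ_[p] → ℚ_[p]) he2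
      push_cast at hc
      convert hc using 2 <;> push_cast <;> ring
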